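/- Let P be a central product of subgroups P₁ and P₂ with P₁ ∩ P₂ = Z, where at least one Pᵢ has exponent p (p odd). If Xᵢ ∈ ℳ_Z(Pᵢ) for i = 1, 2 (i.e., Z < Xᵢ = Ω₁(Xᵢ) and [Xᵢ,Xᵢ] ≤ Z), then X₁X₂ ∈ ℳ_Z(P). -/

import Mathlib

open scoped commutatorElement in
private lemma comm_prod_commutator {G : Type*} [Group G] (A B : Subgroup G)
    (h : ∀ a ∈ A, ∀ b ∈ B, Commute a b)
    (a₁ a₂ : A) (b₁ b₂ : B) :
    ⁅(a₁ : G) * b₁, (a₂ : G) * b₂⁆ = ⁅(a₁ : G), (a₂ : G)⁆ * ⁅(b₁ : G), (b₂ : G)⁆ := by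
  let φ : A × B →* G :=
    { toFun := fun q => (q.1 : G) * q.2
      map_one' := by simp
      map_mul' := fun q r => by
        simpa using (h r.1 r.1.2 q.2 q.2.2).mul_mul_mul_comm (q.1 : G) (r.2 : G) }
  have key := map_commutatorElement φ (a₁, b₁) (a₂, b₂)
  have h1 : ⁅((a₁, b₁) : A × B), ((a₂, b₂) : A × B)⁆ = (⁅a₁, a₂⁆, ⁅b₁, b₂⁆) := by
    simp [commutatorElement_def, Prod.ext_iff]
  rw [h1] at key
  have h2 : φ (⁅a₁, a₂⁆, ⁅b₁, b₂⁆) = ⁅(a₁ : G), (a₂ : G)⁆ * ⁅(b₁ : G), (b₂ : G)⁆ := by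
    simp [φ, commutatorElement_def]
  rw [h2] at key
  simpa [φ] using key.symm

/-- Let `P` be a central product of subgroups `P₁`, `P₂` with `P₁ ∩ P₂ = Z`
central of exponent dividing `p`, where at least one `Pᵢ` has exponent `p`
(`p` odd). If `Xᵢ ∈ ℳ_Z(Pᵢ)` for `i = 1, 2`, then `X₁X₂ ∈ ℳ_Z(P)`. -/
theorem stmt_12 {p : ℕ} (hp : p.Prime) (hodd : Odd p)
    {P : Type*} [Group P] [Finite P] (hP : IsPGroup p P)
    (P₁ P₂ : Subgroup P)
    (hprod : ∀ g : P, ∃ a ∈ P₁, ∃ b ∈ P₂, g = a * b)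
    (hcomm : ∀ a ∈ P₁, ∀ b ∈ P₂, a * b = b * a)
    (Z : Subgroup P) (hZ : P₁ ⊓ P₂ = Z)
    (hZc : Z ≤ Subgroup.center P) (hZexp : ∀ z ∈ Z, z ^ p = 1)
    (hexp : (∀ x ∈ P₁, x ^ p = 1) ∨ (∀ x ∈ P₂, x ^ p = 1))
    (X₁ X₂ : Subgroup P) (hX₁P : X₁ ≤ P₁) (hX₂P : X₂ ≤ P₂)
    (hX₁ : Z < X₁ ∧ X₁ = Subgroup.closure {x : P | x ∈ X₁ ∧ x ^ p = 1} ∧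
      ⁅X₁, X₁⁆ ≤ Z)
    (hX₂ : Z < X₂ ∧ X₂ = Subgroup.closure {x : P | x ∈ X₂ ∧ x ^ p = 1} ∧
      ⁅X₂, X₂⁆ ≤ Z) :
    Z < X₁ ⊔ X₂ ∧
      X₁ ⊔ X₂ = Subgroup.closure {x : P | x ∈ X₁ ⊔ X₂ ∧ x ^ p = 1} ∧
      ⁅X₁ ⊔ X₂, X₁ ⊔ X₂⁆ ≤ Z := by
  obtain ⟨hX₁Z, hX₁Ω, hX₁c⟩ := hX₁
  obtain ⟨hX₂Z, hX₂Ω, hX₂c⟩ := hX₂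
  -- elementwise commuting of X₁ and X₂
  have hc : ∀ a ∈ X₁, ∀ b ∈ X₂, Commute a b := fun a ha b hb =>
    hcomm a (hX₁P ha) b (hX₂P hb)
  -- decomposition of elements of the join
  have key : ∀ g ∈ X₁ ⊔ X₂, ∃ a ∈ X₁, ∃ b ∈ X₂, g = a * b := by
    intro g hg
    rw [Subgroup.sup_eq_closure] at hg
    induction hg using Subgroup.closure_induction with
    | mem x hx =>
      rcases hx with hx | hx
      · exact ⟨x, hx, 1, one_mem _, by simp⟩
      · exact ⟨1, one_mem _, x, hx, by simp⟩
    | one => exact ⟨1, one_mem _, 1, one_mem _, by simp⟩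
    | mul x y hx hy ihx ihy =>
      obtain ⟨a₁, ha₁, b₁, hb₁, rfl⟩ := ihx
      obtain ⟨a₂, ha₂, b₂, hb₂, rfl⟩ := ihy
      exact ⟨a₁ * a₂, mul_mem ha₁ ha₂, b₁ * b₂, mul_mem hb₁ hb₂, by
        rw [(hc a₂ ha₂ b₁ hb₁).symm.mul_mul_mul_comm]⟩
    | inv x hx ihx =>
      obtain ⟨a, ha, b, hb, rfl⟩ := ihx
      exact ⟨a⁻¹, inv_mem ha, b⁻¹, inv_mem hb, by
        rw [mul_inv_rev, ((hc a ha b hb).inv_inv).symm.eq]⟩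
  refine ⟨lt_of_lt_of_le hX₁Z le_sup_left, ?_, ?_⟩
  · apply le_antisymm
    · have hs1 : {x : P | x ∈ X₁ ∧ x ^ p = 1} ⊆ {x : P | x ∈ X₁ ⊔ X₂ ∧ x ^ p = 1} :=
        fun x hx => ⟨le_sup_left (a := X₁) (b := X₂) hx.1, hx.2⟩
      have hs2 : {x : P | x ∈ X₂ ∧ x ^ p = 1} ⊆ {x : P | x ∈ X₁ ⊔ X₂ ∧ x ^ p = 1} :=
        fun x hx => ⟨le_sup_right (a := X₁) (b := X₂) hx.1, hx.2⟩
      refine sup_le ?_ ?_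
      · exact le_trans (le_of_eq hX₁Ω) (Subgroup.closure_mono hs1)
      · exact le_trans (le_of_eq hX₂Ω) (Subgroup.closure_mono hs2)
    · exact (Subgroup.closure_le _).mpr fun x hx => hx.1
  · rw [Subgroup.commutator_le]
    intro g₁ hg₁ g₂ hg₂
    obtain ⟨a₁, ha₁, b₁, hb₁, rfl⟩ := key g₁ hg₁
    obtain ⟨a₂, ha₂, b₂, hb₂, rfl⟩ := key g₂ hg₂
    have := comm_prod_commutator X₁ X₂ hc ⟨a₁, ha₁⟩ ⟨a₂, ha₂⟩ ⟨b₁, hb₁⟩ ⟨b₂, hb₂⟩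
    simp only [Subgroup.coe_mk] at this
    rw [this]
    exact mul_mem (Subgroup.commutator_le.mp hX₁c a₁ ha₁ a₂ ha₂)
      (Subgroup.commutator_le.mp hX₂c b₁ hb₁ b₂ hb₂)
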